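/- If an R-module M is w-split, then Ext^i_R(M,N) is GV-torsion for every R-module N and every integer i ≥ 1. -/

import Mathlib

open CategoryTheory

universe u

section Defs
variable (R : Type u) [CommRing R]

/-- `J` is a Glaz–Vasconcelos ideal (GV-ideal): finitely generated and the natural map
`R → Hom_R(J, R)`, `r ↦ (x ↦ r•x)`, is an isomorphism. -/
def IsGVIdeal (J : Ideal R) : Prop :=
  J.FG ∧ Function.Bijective fun r : R =>
    ((LinearMap.lsmul R R r).comp J.subtype : J →ₗ[R] R)

variable (M : Type u) [AddCommGroup M] [Module R M]

/-- `M` is GV-torsion: every element is killed by some GV-ideal. -/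
def IsGVTorsion : Prop :=
  ∀ x : M, ∃ J : Ideal R, IsGVIdeal R J ∧ ∀ a ∈ J, a • x = 0

/-- `M` is GV-torsionfree: no nonzero element is killed by a GV-ideal. -/
def IsGVTorsionFree : Prop :=
  ∀ x : M, (∃ J : Ideal R, IsGVIdeal R J ∧ ∀ a ∈ J, a • x = 0) → x = 0

/-- The w-splitting condition on the epimorphism `g` of a short exact sequence:
there are a GV-ideal `⟨d₁,…,dₙ⟩` and maps `hₖ` with `g ∘ hₖ = (dₖ•·)`. -/
def IsWSplitSeq {B C : Type u} [AddCommGroup B] [Module R B] [AddCommGroup C] [Module R C]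
    (g : B →ₗ[R] C) : Prop :=
  ∃ (n : ℕ) (d : Fin n → R), IsGVIdeal R (Ideal.span (Set.range d)) ∧
    ∃ h : Fin n → (C →ₗ[R] B), ∀ k, ∀ c : C, g (h k c) = d k • c

/-- `M` is a w-split module: some short exact sequence `0 → K → P → M → 0` with
`P` projective is w-split. -/
def IsWSplitModule : Prop :=
  ∃ (P : Type u) (_ : AddCommGroup P) (_ : Module R P), Module.Projective R P ∧
    ∃ g : P →ₗ[R] M, Function.Surjective g ∧ IsWSplitSeq R g

/-- The Ext group `Ext^n_R(M, N)` as an object of `ModuleCat R`. -/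
noncomputable def extMod (n : ℕ) (N : Type u) [AddCommGroup N] [Module R N] : ModuleCat.{u} R :=
  ((Ext R (ModuleCat.{u} R) n).obj (Opposite.op (ModuleCat.of R M))).obj (ModuleCat.of R N)

/-- `M` is a w-module: GV-torsionfree and `Ext¹_R(R/J, M) = 0` for all GV-ideals `J`. -/
def IsWModule : Prop :=
  IsGVTorsionFree R M ∧
    ∀ J : Ideal R, IsGVIdeal R J → Subsingleton (extMod R (R ⧸ J) 1 M)

/-- `ι : M →ₗ E` exhibits `E` as a w-envelope `M_w` of the GV-torsionfree module `M`:
`E` is a w-module containing `M` with GV-torsion quotient `E/M`. -/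
def IsWEnvelope (E : Type u) [AddCommGroup E] [Module R E] (ι : M →ₗ[R] E) : Prop :=
  Function.Injective ι ∧ IsWModule R E ∧ IsGVTorsion R (E ⧸ LinearMap.range ι)

/-- `M` is w-projective: `Ext¹_R(L(M), N)` is GV-torsion for every GV-torsionfree
w-module `N`, where `L(M) = (M/tor_GV(M))_w`. -/
def IsWProjective : Prop :=
  ∀ (T : Submodule R M),
    (∀ x : M, x ∈ T ↔ ∃ J : Ideal R, IsGVIdeal R J ∧ ∀ a ∈ J, a • x = 0) →
    ∀ (L : Type u) (_ : AddCommGroup L) (_ : Module R L) (ι : (M ⧸ T) →ₗ[R] L),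
      IsWEnvelope R (M ⧸ T) L ι →
      ∀ (N : Type u) (_ : AddCommGroup N) (_ : Module R N),
        IsGVTorsionFree R N → IsWModule R N → IsGVTorsion R (extMod R L 1 N)

/-- `I` is a w-ideal: `I_w = I`, i.e. any `x` with `Jx ⊆ I` for some GV-ideal `J`
already lies in `I`. -/
def IsWIdeal (I : Ideal R) : Prop :=
  ∀ x : R, (∃ J : Ideal R, IsGVIdeal R J ∧ ∀ a ∈ J, a * x ∈ I) → x ∈ I

/-- `I` is a maximal w-ideal: maximal among proper w-ideals of `R`. -/
def IsMaximalWIdeal (I : Ideal R) : Prop :=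
  I ≠ ⊤ ∧ IsWIdeal R I ∧ ∀ I' : Ideal R, IsWIdeal R I' → I' ≠ ⊤ → I ≤ I' → I = I'

end Defs


section Aux
open CategoryTheory

section HCsmul
variable {S : Type*} [Semiring S] {C : Type*} [Category C] [Preadditive C]
  [CategoryTheory.Linear S C] {ι : Type*} {c : ComplexShape ι}

lemma homologyMap_smul' {K L : HomologicalComplex C c} (φ : K ⟶ L) (r : S) (i : ι)
    [K.HasHomology i] [L.HasHomology i] :
    HomologicalComplex.homologyMap (r • φ) i = r • HomologicalComplex.homologyMap φ i := by
  have : (HomologicalComplex.shortComplexFunctor C c i).map (r • φ) =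
      r • (HomologicalComplex.shortComplexFunctor C c i).map φ := by
    ext <;> rfl
  rw [HomologicalComplex.homologyMap, this, ShortComplex.homologyMap_smul,
    HomologicalComplex.homologyMap]
  rfl
end HCsmul

variable {R : Type u} [CommRing R]

noncomputable abbrev extF (N : ModuleCat.{u} R) : ModuleCat.{u} R ⥤ (ModuleCat.{u} R)ᵒᵖ :=
  ((linearYoneda R (ModuleCat.{u} R)).obj N).rightOp

lemma ext_map_eq (n : ℕ) {X Y : ModuleCat.{u} R} (f : X ⟶ Y) (N : ModuleCat.{u} R) :
    ((Ext R (ModuleCat.{u} R) n).map f.op).app N = (((extF N).leftDerived n).map f).unop := rfl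

lemma ext_map_smul_id (n : ℕ) (X N : ModuleCat.{u} R) (r : R) :
    ((Ext R (ModuleCat.{u} R) n).map (r • 𝟙 X).op).app N =
      r • 𝟙 (((Ext R (ModuleCat.{u} R) n).obj (Opposite.op X)).obj N) := by
  let F := extF (R := R) N
  let P : ProjectiveResolution X := ProjectiveResolution.of X
  have comm : (r • 𝟙 P.complex).f 0 ≫ P.π.f 0 = P.π.f 0 ≫ (r • 𝟙 X) := by
    exact (Linear.smul_comp _ _ _ r _ _).trans ((congrArg (r • ·) ((Category.id_comp _).trans
      (Category.comp_id (P.π.f 0 : P.complex.X 0 ⟶ X)).symm)).trans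
      (Linear.comp_smul _ _ _ (P.π.f 0 : P.complex.X 0 ⟶ X) r (𝟙 X)).symm)
  set K' := (F.mapHomologicalComplex (ComplexShape.down ℕ)).obj P.complex with hK'
  set Θ := (F.mapHomologicalComplex (ComplexShape.down ℕ)).map (r • 𝟙 P.complex) with hTheta
  have step2 : (F.leftDerived n).map (r • 𝟙 X) =
      (P.isoLeftDerivedObj F n).hom ≫
        HomologicalComplex.homologyMap Θ n ≫
        (P.isoLeftDerivedObj F n).inv := by
    exact ((Iso.eq_comp_inv _).2 (ProjectiveResolution.isoLeftDerivedObj_hom_naturality (r • 𝟙 X) P P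
        (r • 𝟙 P.complex) comm F n)).trans (Category.assoc _ _ _)
  set ψ : K'.unop ⟶ K'.unop := r • 𝟙 K'.unop with hpsi
  have hΘ : Θ = (HomologicalComplex.opFunctor _ _).map ψ.op := by
    ext i
    apply Quiver.Hom.unop_inj
    ext ρ
    obtain ⟨ρ', rfl⟩ : ∃ ρ' : P.complex.X i ⟶ N, ρ' = ρ := ⟨ρ, rfl⟩
    show ((r • 𝟙 (P.complex.X i)) ≫ ρ' : P.complex.X i ⟶ N) = r • ρ'
    rw [Linear.smul_comp, Category.id_comp]
  have hψH : HomologicalComplex.homologyMap ψ n = r • 𝟙 (K'.unop.homology n) := by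
    rw [hpsi, homologyMap_smul', HomologicalComplex.homologyMap_id]
  have step3 : HomologicalComplex.homologyMap Θ n =
      (K'.unop.homologyOp n).hom ≫ (r • 𝟙 (K'.unop.homology n)).op ≫
        (K'.unop.homologyOp n).inv := by
    rw [hΘ]
    exact ((Iso.eq_comp_inv _).2 ((HomologicalComplex.homologyOp_hom_naturality ψ n).trans
      (congrArg (fun t => (K'.unop.homologyOp n).hom ≫ t.op) hψH))).trans (Category.assoc _ _ _)
  have key : ∀ {Y Z : ModuleCat.{u} R} (f : Y ⟶ Z) (g : Z ⟶ Y), f ≫ g = 𝟙 Y →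
      f ≫ (r • 𝟙 Z) ≫ g = r • 𝟙 Y := by
    intro Y Z f g hfg
    rw [Linear.smul_comp, Linear.comp_smul, Category.id_comp, hfg]
  rw [ext_map_eq (R := R) n (r • 𝟙 X) N, step2, step3]
  let T := (K'.unop.homologyOp n).unop ≪≫ (P.isoLeftDerivedObj F n).unop
  exact key T.inv T.hom T.inv_hom_id

end Aux

/-- If `M` is w-split then `Ext^i_R(M, N)` is GV-torsion for all `N` and all `i ≥ 1`. -/
theorem stmt4 {R : Type u} [CommRing R] {M : Type u} [AddCommGroup M] [Module R M]
    (hM : IsWSplitModule R M) :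
    ∀ (N : Type u) (_ : AddCommGroup N) (_ : Module R N) (i : ℕ), 1 ≤ i →
      IsGVTorsion R (extMod R M i N) := by
  obtain ⟨P, _, _, hproj, g, hgsurj, n, dv, hGV, h, hcomp⟩ := hM
  intro N _ _ i hi x
  obtain ⟨m, rfl⟩ : ∃ m, i = m + 1 := ⟨i - 1, (Nat.succ_pred_eq_of_pos hi).symm⟩
  refine ⟨Ideal.span (Set.range dv), hGV, ?_⟩
  have key : ∀ k, dv k • x = 0 := by
    intro k
    haveI : Projective (ModuleCat.of R P) := (IsProjective.iff_projective P).mp hproj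
    set gC : ModuleCat.of R P ⟶ ModuleCat.of R M := ModuleCat.ofHom g with hgC
    set hC : ModuleCat.of R M ⟶ ModuleCat.of R P := ModuleCat.ofHom (h k) with hhC
    have hfact : hC ≫ gC = dv k • 𝟙 (ModuleCat.of R M) := by
      ext c
      exact hcomp k c
    have h1 : ((Ext R (ModuleCat.{u} R) (m + 1)).map (dv k • 𝟙 (ModuleCat.of R M)).op).app
        (ModuleCat.of R N) x = dv k • x := by
      rw [ext_map_smul_id]
      rfl
    rw [← h1, ← hfact]
    have hco : (hC ≫ gC).op = gC.op ≫ hC.op := rfl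
    rw [hco, Functor.map_comp]
    set A := ((Ext R (ModuleCat.{u} R) (m + 1)).obj
        (Opposite.op (ModuleCat.of R P))).obj (ModuleCat.of R N) with hA
    have hz : Limits.IsZero A := isZero_Ext_succ_of_projective _ _ m
    have h0 : (𝟙 A : A ⟶ A) = 0 := hz.eq_of_src _ _
    set u := ((Ext R (ModuleCat.{u} R) (m + 1)).map gC.op).app (ModuleCat.of R N) with hu
    set v := ((Ext R (ModuleCat.{u} R) (m + 1)).map hC.op).app (ModuleCat.of R N) with hv
    show ((u ≫ v) : _ ⟶ _) x = 0
    have hux : u x = 0 := by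
      have : u x = (𝟙 A : A ⟶ A) (u x) := rfl
      rw [this, h0]
      rfl
    show v (u x) = 0
    rw [hux]
    exact map_zero v.hom
  intro a ha
  induction ha using Submodule.span_induction with
  | mem b hb =>
    obtain ⟨k, rfl⟩ := hb
    exact key k
  | zero => exact zero_smul R x
  | add b c _ _ hb hc => rw [add_smul, hb, hc, add_zero]
  | smul r b _ hb => rw [smul_eq_mul, mul_smul, hb, smul_zero]
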